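/- Assume the highest root θ is fundamental and let α_θ be the unique simple root with (θ, α_θ) ≠ 0 (α_θ is then a long root). Let w ∈ W satisfy w(θ) = α_θ and have minimal length among all elements of W taking θ to α_θ. Then w⁻¹ permutes the set of simple roots orthogonal to α_θ: for every β ∈ Π with (β, α_θ) = 0, one has w⁻¹(β) ∈ Π and (w⁻¹(β), α_θ) = 0. -/

import Mathlib

open scoped InnerProductSpace

/-- An irreducible reduced crystallographic root system, spanning a finite-dimensional
real inner product space, together with a fixed base (set of simple roots) and the
coefficient function expressing each root in the base. -/
structure RootSystemData (V : Type) [NormedAddCommGroup V] [InnerProductSpace ℝ V]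
    [FiniteDimensional ℝ V] where
  roots : Set V
  finite : roots.Finite
  nonzero : ∀ γ ∈ roots, γ ≠ 0
  spans : Submodule.span ℝ roots = ⊤
  reflClosed : ∀ α ∈ roots, ∀ β ∈ roots, β - (2 * ⟪β, α⟫_ℝ / ⟪α, α⟫_ℝ) • α ∈ roots
  crystal : ∀ α ∈ roots, ∀ β ∈ roots, ∃ k : ℤ, 2 * ⟪β, α⟫_ℝ / ⟪α, α⟫_ℝ = (k : ℝ)
  reduced : ∀ α ∈ roots, ∀ t : ℝ, t • α ∈ roots → t = 1 ∨ t = -1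
  irred : ∀ A B : Set V, roots = A ∪ B → (∀ a ∈ A, ∀ b ∈ B, ⟪a, b⟫_ℝ = 0) →
    A = ∅ ∨ B = ∅
  simples : Finset V
  simples_sub : ↑simples ⊆ roots
  simples_indep : LinearIndependent ℝ (Subtype.val : {x : V // x ∈ simples} → V)
  coeff : V → V → ℤ
  coeff_spec : ∀ γ ∈ roots, γ = ∑ α ∈ simples, coeff γ α • α
  coeff_sign : ∀ γ ∈ roots, (∀ α ∈ simples, 0 ≤ coeff γ α) ∨ (∀ α ∈ simples, coeff γ α ≤ 0)

namespace RootSystemData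

variable {V : Type} [NormedAddCommGroup V] [InnerProductSpace ℝ V] [FiniteDimensional ℝ V]
variable (R : RootSystemData V)

/-- The set of positive roots `Δ⁺` (w.r.t. the base `simples`). -/
def posRoots : Set V := {γ | γ ∈ R.roots ∧ ∀ α ∈ R.simples, 0 ≤ R.coeff γ α}

/-- The partial order `μ ≼ ν`: `ν - μ` is a nonnegative integral combination of simple roots. -/
def rle (μ ν : V) : Prop := ∃ c : V → ℕ, ν - μ = ∑ α ∈ R.simples, (c α : ℤ) • α

/-- `θ` is the highest root. -/
def IsHighest (θ : V) : Prop := θ ∈ R.posRoots ∧ ∀ γ ∈ R.roots, R.rle γ θ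

/-- `γ` is a long root: a root of maximal length. -/
def IsLong (γ : V) : Prop := γ ∈ R.roots ∧ ∀ γ' ∈ R.roots, ‖γ'‖ ≤ ‖γ‖

/-- `I` is an upper ideal of `(Δ⁺, ≼)`. -/
def IsUpperIdeal (I : Set V) : Prop :=
  I ⊆ R.posRoots ∧ ∀ ν ∈ I, ∀ γ ∈ R.posRoots, R.rle ν γ → γ ∈ I

/-- `I` is an abelian upper ideal of `(Δ⁺, ≼)`. -/
def IsAbelianIdeal (I : Set V) : Prop :=
  R.IsUpperIdeal I ∧ ∀ γ₁ ∈ I, ∀ γ₂ ∈ I, γ₁ + γ₂ ∉ R.roots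

/-- The set of minimal elements of `M ⊆ Δ⁺` w.r.t. `≼`. -/
def minSet (M : Set V) : Set V := {γ | γ ∈ M ∧ ∀ ν ∈ M, R.rle ν γ → ν = γ}

/-- The set of maximal elements of `M ⊆ Δ⁺` w.r.t. `≼`. -/
def maxSet (M : Set V) : Set V := {γ | γ ∈ M ∧ ∀ ν ∈ M, R.rle γ ν → ν = γ}

/-- `S(I) = {α ∈ Π : ∃ γ ∈ min(I), γ - α ∈ Δ⁺ ∪ {0}}`; the complement `Π ∖ S(I)` is the
set of simple roots of the standard Levi subalgebra of the normaliser of the ideal `I`. -/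
def normS (I : Set V) : Set V :=
  {α | α ∈ R.simples ∧ ∃ γ ∈ R.minSet I, (γ - α ∈ R.posRoots ∨ γ = α)}

/-- `H = {γ ∈ Δ⁺ : (γ, θ) ≠ 0}`. -/
def Hset (θ : V) : Set V := {γ | γ ∈ R.posRoots ∧ ⟪γ, θ⟫_ℝ ≠ 0}

/-- `deg_S(γ) = Σ_{α ∈ S} [γ:α]`. -/
def degS (S : Finset V) (γ : V) : ℤ := ∑ α ∈ S, R.coeff γ α

/-- `I_S = {γ ∈ Δ⁺ : deg_S(γ) ≥ ⌊d(S)/2⌋ + 1}`, where `d(S) = deg_S(θ)`: the abelian ideal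
`g(≥ ⌊hot(p)/2⌋ + 1)` associated with the standard parabolic subalgebra `p(S)`. -/
def idealS (S : Finset V) (θ : V) : Set V :=
  {γ | γ ∈ R.posRoots ∧ R.degS S θ / 2 + 1 ≤ R.degS S γ}

/-- The highest root `θ` is fundamental with `α_θ` the unique simple root not
orthogonal to `θ`, and `(θ, α_θ∨) = 1`. -/
def IsFundamental (θ αθ : V) : Prop :=
  αθ ∈ R.simples ∧ ⟪θ, αθ⟫_ℝ ≠ 0 ∧ (∀ β ∈ R.simples, ⟪θ, β⟫_ℝ ≠ 0 → β = αθ) ∧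
    2 * ⟪θ, αθ⟫_ℝ / ⟪αθ, αθ⟫_ℝ = 1

end RootSystemData

/-- The reflection `s_α`. -/
noncomputable def rsRefl {V : Type} [NormedAddCommGroup V] [InnerProductSpace ℝ V] (α x : V) : V :=
  x - (2 * ⟪x, α⟫_ℝ / ⟪α, α⟫_ℝ) • α

/-- The element of the Weyl group given by the word `l = [α₁, …, α_m]`,
namely `s_{α₁} ∘ ⋯ ∘ s_{α_m}`; its inverse is `wordMap l.reverse`. -/
noncomputable def wordMap {V : Type} [NormedAddCommGroup V] [InnerProductSpace ℝ V] (l : List V) : V → V :=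
  l.foldr (fun α f => rsRefl α ∘ f) id

section Aux1
variable {V : Type} [NormedAddCommGroup V] [InnerProductSpace ℝ V]

lemma rsRefl_def (α x : V) : rsRefl α x = x - (2 * ⟪x, α⟫_ℝ / ⟪α, α⟫_ℝ) • α := rfl

lemma inner_rsRefl (α : V) (hα : α ≠ 0) (x y : V) :
    ⟪rsRefl α x, rsRefl α y⟫_ℝ = ⟪x, y⟫_ℝ := by
  have hA : ⟪α, α⟫_ℝ ≠ 0 := fun h => hα (inner_self_eq_zero.mp h)
  simp only [rsRefl, inner_sub_left, inner_sub_right, real_inner_smul_left,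
    real_inner_smul_right]
  have hxy : ⟪y, α⟫_ℝ = ⟪α, y⟫_ℝ := real_inner_comm _ _
  field_simp
  rw [← hxy]
  ring

lemma rsRefl_invol (α : V) (hα : α ≠ 0) (x : V) : rsRefl α (rsRefl α x) = x := by
  have hA : ⟪α, α⟫_ℝ ≠ 0 := fun h => hα (inner_self_eq_zero.mp h)
  simp only [rsRefl, inner_sub_left, real_inner_smul_left]
  rw [sub_sub, ← add_smul]
  have : (2 * ⟪x, α⟫_ℝ / ⟪α, α⟫_ℝ +
      2 * (⟪x, α⟫_ℝ - 2 * ⟪x, α⟫_ℝ / ⟪α, α⟫_ℝ * ⟪α, α⟫_ℝ) / ⟪α, α⟫_ℝ) = 0 := by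
    field_simp
    ring
  rw [this, zero_smul, sub_zero]

lemma rsRefl_add (α x y : V) : rsRefl α (x + y) = rsRefl α x + rsRefl α y := by
  simp only [rsRefl, inner_add_left]
  rw [show (2 * (⟪x, α⟫_ℝ + ⟪y, α⟫_ℝ) / ⟪α, α⟫_ℝ) =
    2 * ⟪x, α⟫_ℝ / ⟪α, α⟫_ℝ + 2 * ⟪y, α⟫_ℝ / ⟪α, α⟫_ℝ by ring, add_smul]
  abel

lemma rsRefl_smul (α : V) (r : ℝ) (x : V) : rsRefl α (r • x) = r • rsRefl α x := by
  simp only [rsRefl, real_inner_smul_left, smul_sub, smul_smul]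
  rw [show 2 * (r * ⟪x, α⟫_ℝ) / ⟪α, α⟫_ℝ = r * (2 * ⟪x, α⟫_ℝ / ⟪α, α⟫_ℝ) by ring]

lemma rsRefl_neg (α x : V) : rsRefl α (-x) = - rsRefl α x := by
  have := rsRefl_smul α (-1 : ℝ) x
  simpa using this

lemma rsRefl_sub (α x y : V) : rsRefl α (x - y) = rsRefl α x - rsRefl α y := by
  rw [sub_eq_add_neg, rsRefl_add, rsRefl_neg, sub_eq_add_neg]

lemma rsRefl_self (α : V) (hα : α ≠ 0) : rsRefl α α = -α := by
  have hA : ⟪α, α⟫_ℝ ≠ 0 := fun h => hα (inner_self_eq_zero.mp h)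
  rw [rsRefl_def]
  rw [show 2 * ⟪α, α⟫_ℝ / ⟪α, α⟫_ℝ = 2 by field_simp]
  module

lemma rsRefl_orth (α x : V) (h : ⟪x, α⟫_ℝ = 0) : rsRefl α x = x := by
  simp [rsRefl_def, h]

lemma rsRefl_conj (α : V) (hα : α ≠ 0) (μ x : V) :
    rsRefl (rsRefl α μ) x = rsRefl α (rsRefl μ (rsRefl α x)) := by
  have h1 : ⟪rsRefl α μ, rsRefl α μ⟫_ℝ = ⟪μ, μ⟫_ℝ := inner_rsRefl α hα μ μ
  have h2 : ⟪x, rsRefl α μ⟫_ℝ = ⟪rsRefl α x, μ⟫_ℝ := by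
    conv_lhs => rw [← rsRefl_invol α hα x]
    exact inner_rsRefl α hα (rsRefl α x) μ
  rw [rsRefl_def (rsRefl α μ) x, h1, h2,
    rsRefl_def μ (rsRefl α x), rsRefl_sub, rsRefl_smul, rsRefl_invol α hα]

lemma wordMap_nil (x : V) : wordMap ([] : List V) x = x := rfl

lemma wordMap_cons (a : V) (t : List V) (x : V) :
    wordMap (a :: t) x = rsRefl a (wordMap t x) := rfl

lemma wordMap_append (l₁ l₂ : List V) (x : V) :
    wordMap (l₁ ++ l₂) x = wordMap l₁ (wordMap l₂ x) := by
  induction l₁ with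
  | nil => rfl
  | cons a t ih => simp [wordMap_cons, ih]

lemma wordMap_add (l : List V) (x y : V) :
    wordMap l (x + y) = wordMap l x + wordMap l y := by
  induction l with
  | nil => rfl
  | cons a t ih => simp [wordMap_cons, ih, rsRefl_add]

lemma wordMap_smul (l : List V) (r : ℝ) (x : V) :
    wordMap l (r • x) = r • wordMap l x := by
  induction l with
  | nil => rfl
  | cons a t ih => simp [wordMap_cons, ih, rsRefl_smul]

lemma wordMap_neg (l : List V) (x : V) : wordMap l (-x) = - wordMap l x := by
  simpa using wordMap_smul l (-1 : ℝ) x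

lemma wordMap_sub (l : List V) (x y : V) :
    wordMap l (x - y) = wordMap l x - wordMap l y := by
  rw [sub_eq_add_neg, wordMap_add, wordMap_neg, sub_eq_add_neg]

lemma wordMap_zsmul (l : List V) (n : ℤ) (x : V) :
    wordMap l (n • x) = n • wordMap l x := by
  have : (n : ℤ) • x = (n : ℝ) • x := by
    rw [Int.cast_smul_eq_zsmul]
  rw [this, wordMap_smul]
  rw [Int.cast_smul_eq_zsmul]

lemma wordMap_inner (l : List V) (h0 : ∀ a ∈ l, a ≠ 0) (x y : V) :
    ⟪wordMap l x, wordMap l y⟫_ℝ = ⟪x, y⟫_ℝ := by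
  induction l with
  | nil => rfl
  | cons a t ih =>
    rw [wordMap_cons, wordMap_cons, inner_rsRefl a (h0 a (by simp)),
      ih (fun b hb => h0 b (by simp [hb]))]

lemma wordMap_left_inv (l : List V) (h0 : ∀ a ∈ l, a ≠ 0) (x : V) :
    wordMap l.reverse (wordMap l x) = x := by
  induction l with
  | nil => rfl
  | cons a t ih =>
    rw [List.reverse_cons, wordMap_cons, wordMap_append,
      show wordMap [a] (rsRefl a (wordMap t x)) = rsRefl a (rsRefl a (wordMap t x)) from rfl,
      rsRefl_invol a (h0 a (by simp)), ih (fun b hb => h0 b (by simp [hb]))]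

lemma wordMap_right_inv (l : List V) (h0 : ∀ a ∈ l, a ≠ 0) (x : V) :
    wordMap l (wordMap l.reverse x) = x := by
  induction l generalizing x with
  | nil => rfl
  | cons a t ih =>
    rw [List.reverse_cons, wordMap_append, wordMap_cons,
      show wordMap [a] x = rsRefl a x from rfl,
      ih (fun b hb => h0 b (by simp [hb])), rsRefl_invol a (h0 a (by simp))]

end Aux1
namespace RootSystemData
open scoped Classical
section Aux2
variable {V : Type} [NormedAddCommGroup V] [InnerProductSpace ℝ V] [FiniteDimensional ℝ V]
variable (R : RootSystemData V)

lemma inner_self_pos_root {γ : V} (h : γ ∈ R.roots) : 0 < ⟪γ, γ⟫_ℝ := by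
  rcases lt_or_eq_of_le (real_inner_self_nonneg (x := γ)) with h' | h'
  · exact h'
  · exact absurd (inner_self_eq_zero.mp h'.symm) (R.nonzero γ h)

lemma rsRefl_root {α γ : V} (hα : α ∈ R.roots) (hγ : γ ∈ R.roots) :
    rsRefl α γ ∈ R.roots := R.reflClosed α hα γ hγ

lemma neg_root {γ : V} (h : γ ∈ R.roots) : -γ ∈ R.roots := by
  have := R.reflClosed γ h γ h
  rwa [show γ - (2 * ⟪γ, γ⟫_ℝ / ⟪γ, γ⟫_ℝ) • γ = rsRefl γ γ from rfl,
    rsRefl_self γ (R.nonzero γ h)] at this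

lemma sum_coeff_zero (c : V → ℝ) (h : ∑ α ∈ R.simples, c α • α = 0) :
    ∀ α ∈ R.simples, c α = 0 := by
  intro α hα
  have hli := linearIndependent_iff'.mp R.simples_indep R.simples.attach
    (fun i => c i.val)
  have hsum : ∑ i ∈ R.simples.attach, c i.val • i.val = 0 := by
    rw [Finset.sum_attach R.simples (fun a => c a • a)]; exact h
  exact hli hsum ⟨α, hα⟩ (Finset.mem_attach _ _)

lemma coeff_spec_real {γ : V} (h : γ ∈ R.roots) :
    γ = ∑ α ∈ R.simples, ((R.coeff γ α : ℝ)) • α := by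
  simp_rw [Int.cast_smul_eq_zsmul]
  exact R.coeff_spec γ h

lemma coeff_unique {γ : V} (h : γ ∈ R.roots) (d : V → ℝ)
    (hd : γ = ∑ α ∈ R.simples, d α • α) :
    ∀ α ∈ R.simples, d α = (R.coeff γ α : ℝ) := by
  intro α hα
  have h0 : ∑ β ∈ R.simples, (d β - (R.coeff γ β : ℝ)) • β = 0 := by
    simp_rw [sub_smul, Finset.sum_sub_distrib, ← hd, ← R.coeff_spec_real h, sub_self]
  have := R.sum_coeff_zero _ h0 α hα
  linarith [this]

lemma root_nonzero_coeff {γ : V} (hγ : γ ∈ R.roots)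
    (h : ∀ α ∈ R.simples, R.coeff γ α = 0) : False := by
  apply R.nonzero γ hγ
  rw [R.coeff_spec γ hγ]
  apply Finset.sum_eq_zero
  intro α hα
  rw [h α hα, zero_smul]

lemma coeff_neg {γ : V} (h : γ ∈ R.roots) :
    ∀ α ∈ R.simples, R.coeff (-γ) α = - R.coeff γ α := by
  intro α hα
  have huniq := R.coeff_unique (R.neg_root h) (fun β => -(R.coeff γ β : ℝ)) (by
    show -γ = ∑ β ∈ R.simples, (-(R.coeff γ β : ℝ)) • β
    rw [show ∑ β ∈ R.simples, (-(R.coeff γ β : ℝ)) • β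
        = -∑ β ∈ R.simples, ((R.coeff γ β : ℝ)) • β by
      simp [neg_smul, Finset.sum_neg_distrib], ← R.coeff_spec_real h])
  have h2 : -(R.coeff γ α : ℝ) = (R.coeff (-γ) α : ℝ) := huniq α hα
  exact_mod_cast h2.symm

lemma pos_or_neg {γ : V} (h : γ ∈ R.roots) :
    γ ∈ R.posRoots ∨ -γ ∈ R.posRoots := by
  rcases R.coeff_sign γ h with hp | hn
  · exact Or.inl ⟨h, hp⟩
  · right
    refine ⟨R.neg_root h, fun α hα => ?_⟩
    rw [R.coeff_neg h α hα]
    have := hn α hα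
    omega

lemma not_pos_and_neg {γ : V} (h1 : γ ∈ R.posRoots) (h2 : -γ ∈ R.posRoots) : False := by
  apply R.root_nonzero_coeff h1.1
  intro α hα
  have a1 := h1.2 α hα
  have a2 := h2.2 α hα
  rw [R.coeff_neg h1.1 α hα] at a2
  omega

lemma simple_coeff {β : V} (hβ : β ∈ R.simples) :
    ∀ α ∈ R.simples, R.coeff β α = if α = β then 1 else 0 := by
  intro α hα
  have hroot : β ∈ R.roots := R.simples_sub hβ
  have huniq := R.coeff_unique hroot (fun α => if α = β then (1:ℝ) else 0) (by
    show β = ∑ α ∈ R.simples, (if α = β then (1:ℝ) else 0) • α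
    simp_rw [ite_smul, one_smul, zero_smul]
    rw [Finset.sum_ite_eq' R.simples β (fun a => a), if_pos hβ])
  have h2 : (if α = β then (1:ℝ) else 0) = (R.coeff β α : ℝ) := huniq α hα
  by_cases hc : α = β
  · rw [if_pos hc] at h2; rw [if_pos hc]; exact_mod_cast h2.symm
  · rw [if_neg hc] at h2; rw [if_neg hc]; exact_mod_cast h2.symm

lemma simple_pos {β : V} (hβ : β ∈ R.simples) : β ∈ R.posRoots := by
  refine ⟨R.simples_sub hβ, fun α hα => ?_⟩
  rw [R.simple_coeff hβ α hα]
  by_cases hc : α = β <;> simp [hc]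

lemma crystal_int {α γ : V} (hα : α ∈ R.roots) (hγ : γ ∈ R.roots) :
    ∃ k : ℤ, 2 * ⟪γ, α⟫_ℝ / ⟪α, α⟫_ℝ = (k : ℝ) ∧ rsRefl α γ = γ - (k : ℝ) • α := by
  obtain ⟨k, hk⟩ := R.crystal α hα γ hγ
  exact ⟨k, hk, by rw [rsRefl_def, hk]⟩

lemma root_sub_root {μ ν : V} (hμ : μ ∈ R.roots) (hν : ν ∈ R.roots)
    (hinner : 0 < ⟪μ, ν⟫_ℝ) (hne : μ ≠ ν) : μ - ν ∈ R.roots := by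
  obtain ⟨k, hk, hks⟩ := R.crystal_int hν hμ
  obtain ⟨k', hk', hks'⟩ := R.crystal_int hμ hν
  have hνν := R.inner_self_pos_root hν
  have hμμ := R.inner_self_pos_root hμ
  have hc : ⟪ν, μ⟫_ℝ = ⟪μ, ν⟫_ℝ := real_inner_comm _ _
  have hk2 : 2 * ⟪μ, ν⟫_ℝ = k * ⟪ν, ν⟫_ℝ := by
    field_simp at hk; linarith
  have hk'2 : 2 * ⟪μ, ν⟫_ℝ = k' * ⟪μ, μ⟫_ℝ := by
    field_simp at hk'; linarith
  have hkpos : 0 < (k : ℝ) := by nlinarith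
  have hk'pos : 0 < (k' : ℝ) := by nlinarith
  have hk1 : 1 ≤ k := by exact_mod_cast hkpos
  have hk'1 : 1 ≤ k' := by exact_mod_cast hk'pos
  rcases eq_or_lt_of_le hk1 with h1 | h2
  · have heq : rsRefl ν μ = μ - ν := by
      rw [hks, ← h1]; norm_num
    rw [← heq]; exact R.rsRefl_root hν hμ
  · rcases eq_or_lt_of_le hk'1 with h1' | h2'
    · have heq : rsRefl μ ν = ν - μ := by
        rw [hks', ← h1']; norm_num
      have := R.neg_root (heq ▸ R.rsRefl_root hμ hν)
      rwa [neg_sub] at this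
    · exfalso
      have hkk : (2:ℝ) ≤ k := by exact_mod_cast h2
      have hkk' : (2:ℝ) ≤ k' := by exact_mod_cast h2'
      have hzero : ⟪μ - ν, μ - ν⟫_ℝ ≤ 0 := by
        rw [real_inner_sub_sub_self]
        nlinarith
      have hnn := real_inner_self_nonneg (x := μ - ν)
      have h0 : μ - ν = 0 := inner_self_eq_zero.mp (le_antisymm hzero hnn)
      exact hne (sub_eq_zero.mp h0)

end Aux2
end RootSystemData
namespace RootSystemData
open scoped Classical
section Aux3
variable {V : Type} [NormedAddCommGroup V] [InnerProductSpace ℝ V] [FiniteDimensional ℝ V]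
variable (R : RootSystemData V)

lemma wordMap_roots (l : List V) (hl : ∀ a ∈ l, a ∈ R.roots) {γ : V} (hγ : γ ∈ R.roots) :
    wordMap l γ ∈ R.roots := by
  induction l with
  | nil => exact hγ
  | cons a t ih =>
    rw [wordMap_cons]
    exact R.rsRefl_root (hl a (by simp)) (ih (fun b hb => hl b (by simp [hb])))

lemma rsRefl_simple_pos {α γ : V} (hα : α ∈ R.simples) (hγ : γ ∈ R.posRoots) (hne : γ ≠ α) :
    rsRefl α γ ∈ R.posRoots := by
  have hαr := R.simples_sub hα
  have hγr := hγ.1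
  obtain ⟨k, hk, hks⟩ := R.crystal_int hαr hγr
  have hδr : rsRefl α γ ∈ R.roots := R.rsRefl_root hαr hγr
  have hdecomp : rsRefl α γ
      = ∑ β ∈ R.simples, ((R.coeff γ β : ℝ) - (if β = α then (k:ℝ) else 0)) • β := by
    rw [hks]
    simp_rw [sub_smul]
    rw [Finset.sum_sub_distrib, ← R.coeff_spec_real hγr]
    congr 1
    simp_rw [ite_smul, zero_smul]
    rw [Finset.sum_ite_eq' R.simples α (fun b => (k:ℝ) • b), if_pos hα]
  have hcoeff := R.coeff_unique hδr _ hdecomp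
  rcases R.pos_or_neg hδr with hp | hn
  · exact hp
  · exfalso
    have hzero : ∀ β ∈ R.simples, β ≠ α → R.coeff γ β = 0 := by
      intro β hβ hne'
      have h1 := hcoeff β hβ
      rw [if_neg hne', sub_zero] at h1
      have h2 := hγ.2 β hβ
      have h3 := hn.2 β hβ
      rw [R.coeff_neg hδr β hβ] at h3
      have h4 : R.coeff γ β = R.coeff (rsRefl α γ) β := by exact_mod_cast h1
      omega
    have hm : γ = ((R.coeff γ α : ℝ)) • α := by
      conv_lhs => rw [R.coeff_spec_real hγr]
      rw [Finset.sum_eq_single_of_mem α hα (fun β hβ hne' => by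
        rw [hzero β hβ hne', Int.cast_zero, zero_smul])]
    have hred := R.reduced α hαr ((R.coeff γ α : ℝ)) (by rw [← hm]; exact hγr)
    have hge : (0:ℝ) ≤ (R.coeff γ α : ℝ) := by exact_mod_cast hγ.2 α hα
    rcases hred with h1 | h1
    · exact hne (by rw [hm, h1, one_smul])
    · rw [h1] at hge; norm_num at hge

lemma exchange (l : List V) (hl : ∀ a ∈ l, a ∈ R.simples) (μ : V) (hμ : μ ∈ R.posRoots)
    (hneg : -(wordMap l.reverse μ) ∈ R.posRoots) :
    ∃ l' : List V, (∀ a ∈ l', a ∈ R.simples) ∧ l'.length + 1 = l.length ∧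
      wordMap l' = rsRefl μ ∘ wordMap l := by
  induction l generalizing μ with
  | nil =>
    exact absurd hneg (fun h => R.not_pos_and_neg hμ (by simpa [wordMap_nil] using h))
  | cons a t ih =>
    have ha : a ∈ R.simples := hl a (by simp)
    have ha0 : a ≠ 0 := R.nonzero a (R.simples_sub ha)
    by_cases hc : μ = a
    · refine ⟨t, fun b hb => hl b (by simp [hb]), by simp, ?_⟩
      funext x
      rw [Function.comp_apply, wordMap_cons, hc, rsRefl_invol a ha0]
    · have hμ' : rsRefl a μ ∈ R.posRoots := R.rsRefl_simple_pos ha hμ hc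
      have hneg' : -(wordMap t.reverse (rsRefl a μ)) ∈ R.posRoots := by
        have heq : wordMap (a :: t).reverse μ = wordMap t.reverse (rsRefl a μ) := by
          rw [List.reverse_cons, wordMap_append]; rfl
        rwa [heq] at hneg
      obtain ⟨t', ht'P, ht'len, ht'⟩ :=
        ih (fun b hb => hl b (by simp [hb])) (rsRefl a μ) hμ' hneg'
      refine ⟨a :: t', fun b hb => ?_, by simpa using ht'len, ?_⟩
      · rcases List.mem_cons.mp hb with h | h
        · subst h; exact ha
        · exact ht'P b h
      · funext x
        rw [wordMap_cons, ht', Function.comp_apply, rsRefl_conj a ha0, rsRefl_invol a ha0]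
        rfl

lemma exchange' (l : List V) (hl : ∀ a ∈ l, a ∈ R.simples) (δ : V) (hδ : δ ∈ R.posRoots)
    (hneg : -(wordMap l δ) ∈ R.posRoots) :
    ∃ l' : List V, (∀ a ∈ l', a ∈ R.simples) ∧ l'.length + 1 = l.length ∧
      wordMap l' = wordMap l ∘ rsRefl δ := by
  have hrev : ∀ a ∈ l.reverse, a ∈ R.simples := fun a ha => hl a (List.mem_reverse.mp ha)
  have h2 : -(wordMap l.reverse.reverse δ) ∈ R.posRoots := by rwa [List.reverse_reverse]
  obtain ⟨l'', hP, hlen, heq⟩ := R.exchange l.reverse hrev δ hδ h2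
  have h0 : ∀ a ∈ l, a ≠ 0 := fun a ha => R.nonzero a (R.simples_sub (hl a ha))
  have h0'' : ∀ a ∈ l'', a ≠ 0 := fun a ha => R.nonzero a (R.simples_sub (hP a ha))
  have hδ0 : δ ≠ 0 := R.nonzero δ hδ.1
  refine ⟨l''.reverse, fun a ha => hP a (List.mem_reverse.mp ha), by simpa using hlen, ?_⟩
  funext x
  have key : wordMap l'' (wordMap l (rsRefl δ x)) = x := by
    rw [heq, Function.comp_apply, wordMap_left_inv l h0, rsRefl_invol δ hδ0]
  calc wordMap l''.reverse x
      = wordMap l''.reverse (wordMap l'' (wordMap l (rsRefl δ x))) := by rw [key]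
    _ = wordMap l (rsRefl δ x) := wordMap_left_inv l'' h0'' _
    _ = (wordMap l ∘ rsRefl δ) x := rfl

lemma coeff_image (l : List V) (hl : ∀ a ∈ l, a ∈ R.simples) {μ : V} (hμ : μ ∈ R.roots) :
    ∀ δ ∈ R.simples, (R.coeff (wordMap l μ) δ : ℝ)
      = ∑ α ∈ R.simples, (R.coeff μ α : ℝ) * (R.coeff (wordMap l α) δ : ℝ) := by
  have hlr : ∀ a ∈ l, a ∈ R.roots := fun a ha => R.simples_sub (hl a ha)
  have hwroot : ∀ α ∈ R.simples, wordMap l α ∈ R.roots :=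
    fun α hα => R.wordMap_roots l hlr (R.simples_sub hα)
  let F : V →ₗ[ℝ] V :=
    { toFun := wordMap l, map_add' := wordMap_add l, map_smul' := wordMap_smul l }
  have e1 : wordMap l μ = ∑ α ∈ R.simples, ((R.coeff μ α : ℝ)) • wordMap l α := by
    conv_lhs => rw [R.coeff_spec_real hμ]
    rw [show wordMap l (∑ α ∈ R.simples, ((R.coeff μ α : ℝ)) • α)
        = F (∑ α ∈ R.simples, ((R.coeff μ α : ℝ)) • α) from rfl, map_sum]
    exact Finset.sum_congr rfl (fun α hα => by rw [map_smul]; rfl)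
  have e2 : ∀ α ∈ R.simples, ((R.coeff μ α : ℝ)) • wordMap l α
      = ∑ δ ∈ R.simples, ((R.coeff μ α : ℝ) * (R.coeff (wordMap l α) δ : ℝ)) • δ := by
    intro α hα
    conv_lhs => rw [R.coeff_spec_real (hwroot α hα)]
    rw [Finset.smul_sum]
    exact Finset.sum_congr rfl (fun δ hδ => by rw [smul_smul])
  have hw : wordMap l μ = ∑ δ ∈ R.simples,
      (∑ α ∈ R.simples, (R.coeff μ α : ℝ) * (R.coeff (wordMap l α) δ : ℝ)) • δ := by
    rw [e1, Finset.sum_congr rfl e2, Finset.sum_comm]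
    exact Finset.sum_congr rfl (fun δ hδ => (Finset.sum_smul).symm)
  intro δ hδ
  exact (R.coeff_unique (R.wordMap_roots l hlr hμ) _ hw δ hδ).symm

lemma pos_image (l : List V) (hl : ∀ a ∈ l, a ∈ R.simples) {μ : V} (hμ : μ ∈ R.posRoots)
    (hface : ∀ α ∈ R.simples, R.coeff μ α ≠ 0 → wordMap l α ∈ R.posRoots) :
    wordMap l μ ∈ R.posRoots := by
  have hlr : ∀ a ∈ l, a ∈ R.roots := fun a ha => R.simples_sub (hl a ha)
  refine ⟨R.wordMap_roots l hlr hμ.1, fun δ hδ => ?_⟩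
  have hc := R.coeff_image l hl hμ.1 δ hδ
  have hnn : (0:ℝ) ≤ (R.coeff (wordMap l μ) δ : ℝ) := by
    rw [hc]
    apply Finset.sum_nonneg
    intro α hα
    by_cases hz : R.coeff μ α = 0
    · simp [hz]
    · have h1 : (0:ℝ) ≤ (R.coeff μ α : ℝ) := by exact_mod_cast hμ.2 α hα
      have h2 : (0:ℝ) ≤ (R.coeff (wordMap l α) δ : ℝ) := by
        exact_mod_cast (hface α hα hz).2 δ hδ
      exact mul_nonneg h1 h2
  exact_mod_cast hnn

end Aux3
end RootSystemData
namespace RootSystemData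
open scoped Classical
section Aux4
variable {V : Type} [NormedAddCommGroup V] [InnerProductSpace ℝ V] [FiniteDimensional ℝ V]
variable (R : RootSystemData V)

lemma coeff_sub {γ δ : V} (hγ : γ ∈ R.roots) (hδ : δ ∈ R.roots) (hs : γ - δ ∈ R.roots) :
    ∀ α ∈ R.simples, R.coeff (γ - δ) α = R.coeff γ α - R.coeff δ α := by
  intro α hα
  have huniq := R.coeff_unique hs (fun β => (R.coeff γ β : ℝ) - (R.coeff δ β : ℝ)) (by
    show γ - δ = ∑ β ∈ R.simples, ((R.coeff γ β : ℝ) - (R.coeff δ β : ℝ)) • β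
    simp_rw [sub_smul]
    rw [Finset.sum_sub_distrib, ← R.coeff_spec_real hγ, ← R.coeff_spec_real hδ])
  have h2 : (R.coeff γ α : ℝ) - (R.coeff δ α : ℝ) = (R.coeff (γ - δ) α : ℝ) := huniq α hα
  exact_mod_cast h2.symm

lemma coeff_add {γ δ : V} (hγ : γ ∈ R.roots) (hδ : δ ∈ R.roots) (hs : γ + δ ∈ R.roots) :
    ∀ α ∈ R.simples, R.coeff (γ + δ) α = R.coeff γ α + R.coeff δ α := by
  intro α hα
  have h := R.coeff_sub hs hδ (by rwa [add_sub_cancel_right]) α hα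
  rw [add_sub_cancel_right] at h
  omega

lemma coeff_rsRefl_simple {α γ : V} (hα : α ∈ R.simples) (hγ : γ ∈ R.roots) :
    ∃ k : ℤ, 2 * ⟪γ, α⟫_ℝ / ⟪α, α⟫_ℝ = (k : ℝ) ∧
      ∀ β ∈ R.simples, R.coeff (rsRefl α γ) β = R.coeff γ β - (if β = α then k else 0) := by
  have hαr := R.simples_sub hα
  obtain ⟨k, hk, hks⟩ := R.crystal_int hαr hγ
  refine ⟨k, hk, fun β hβ => ?_⟩
  have hδr : rsRefl α γ ∈ R.roots := R.rsRefl_root hαr hγ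
  have huniq := R.coeff_unique hδr
    (fun β => (R.coeff γ β : ℝ) - (if β = α then (k : ℝ) else 0)) (by
    show rsRefl α γ = ∑ β ∈ R.simples, ((R.coeff γ β : ℝ) - (if β = α then (k:ℝ) else 0)) • β
    rw [hks]
    simp_rw [sub_smul]
    rw [Finset.sum_sub_distrib, ← R.coeff_spec_real hγ]
    congr 1
    simp_rw [ite_smul, zero_smul]
    rw [Finset.sum_ite_eq' R.simples α (fun b => (k:ℝ) • b), if_pos hα])
  have h2 : (R.coeff (rsRefl α γ) β : ℝ)
      = (R.coeff γ β : ℝ) - (if β = α then (k:ℝ) else 0) := (huniq β hβ).symm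
  by_cases hc : β = α
  · rw [if_pos hc] at h2 ⊢; exact_mod_cast h2
  · rw [if_neg hc] at h2 ⊢; rw [sub_zero] at h2 ⊢; exact_mod_cast h2

variable {θ αθ : V}

lemma inner_alpha_pos (hfund : R.IsFundamental θ αθ) : 0 < ⟪αθ, αθ⟫_ℝ :=
  R.inner_self_pos_root (R.simples_sub hfund.1)

lemma inner_theta_alpha (hfund : R.IsFundamental θ αθ) : ⟪θ, αθ⟫_ℝ = ⟪αθ, αθ⟫_ℝ / 2 := by
  have hA := R.inner_alpha_pos hfund
  have h := hfund.2.2.2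
  field_simp at h
  linarith

lemma inner_theta_simple_zero (hfund : R.IsFundamental θ αθ) {β : V}
    (hβ : β ∈ R.simples) (hne : β ≠ αθ) : ⟪θ, β⟫_ℝ = 0 := by
  by_contra h
  exact hne (hfund.2.2.1 β hβ h)

lemma inner_theta_coeff (hfund : R.IsFundamental θ αθ) {γ : V} (hγ : γ ∈ R.roots) :
    ⟪θ, γ⟫_ℝ = (R.coeff γ αθ : ℝ) * (⟪αθ, αθ⟫_ℝ / 2) := by
  conv_lhs => rw [R.coeff_spec_real hγ]
  rw [inner_sum]
  simp_rw [real_inner_smul_right]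
  rw [Finset.sum_eq_single_of_mem αθ hfund.1 (fun β hβ hne => by
    rw [R.inner_theta_simple_zero hfund hβ hne, mul_zero])]
  rw [R.inner_theta_alpha hfund]

lemma theta_dominant (hfund : R.IsFundamental θ αθ) {μ : V} (hμ : μ ∈ R.posRoots) :
    0 ≤ ⟪θ, μ⟫_ℝ := by
  rw [R.inner_theta_coeff hfund hμ.1]
  have h1 : (0:ℝ) ≤ (R.coeff μ αθ : ℝ) := by exact_mod_cast hμ.2 αθ hfund.1
  have h2 := R.inner_alpha_pos hfund
  positivity

lemma rle_coeff {μ ν : V} (hμ : μ ∈ R.roots) (hν : ν ∈ R.roots) (h : R.rle μ ν) :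
    ∀ α ∈ R.simples, R.coeff μ α ≤ R.coeff ν α := by
  intro α hα
  obtain ⟨c, hc⟩ := h
  have h0 : ∑ β ∈ R.simples, (((c β : ℤ) : ℝ) - ((R.coeff ν β : ℝ) - (R.coeff μ β : ℝ))) • β
      = 0 := by
    simp_rw [sub_smul, Finset.sum_sub_distrib, ← R.coeff_spec_real hν, ← R.coeff_spec_real hμ]
    have hcast : ∑ β ∈ R.simples, (((c β : ℤ) : ℝ)) • β = ν - μ := by
      rw [hc]
      exact Finset.sum_congr rfl (fun β hβ => by rw [Int.cast_smul_eq_zsmul])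
    rw [hcast]
    abel
  have := R.sum_coeff_zero _ h0 α hα
  have h2 : ((c α : ℤ) : ℝ) = (R.coeff ν α : ℝ) - (R.coeff μ α : ℝ) := by linarith
  have h3 : (c α : ℤ) = R.coeff ν α - R.coeff μ α := by exact_mod_cast h2
  omega

lemma theta_long (hθ : R.IsHighest θ) (hfund : R.IsFundamental θ αθ) {γ : V}
    (hγ : γ ∈ R.roots) : ⟪γ, γ⟫_ℝ ≤ ⟪θ, θ⟫_ℝ := by
  by_contra hlt
  push_neg at hlt
  set T : Set V := {x ∈ R.roots | ⟪θ, θ⟫_ℝ < ⟪x, x⟫_ℝ} with hT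
  have hTfin : T.Finite := R.finite.subset (fun x hx => hx.1)
  have hTne : T.Nonempty := ⟨γ, hγ, hlt⟩
  obtain ⟨a, haT, hamax⟩ : ∃ a ∈ T, ∀ a' ∈ T, ∑ α ∈ R.simples, R.coeff a α ≤
      ∑ α ∈ R.simples, R.coeff a' α → ∑ α ∈ R.simples, R.coeff a α = ∑ α ∈ R.simples, R.coeff a' α := by
    obtain ⟨a, ha, h⟩ := Set.exists_max_image T (fun x => ∑ α ∈ R.simples, R.coeff x α) hTfin hTne
    exact ⟨a, ha, fun b hb hle => le_antisymm hle (h b hb)⟩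
  obtain ⟨haroot, halen⟩ := haT
  have hd := R.rle_coeff haroot hθ.1.1 (hθ.2 a haroot)
  have hQdecomp : θ - a = ∑ β ∈ R.simples, ((R.coeff θ β : ℝ) - (R.coeff a β : ℝ)) • β := by
    simp_rw [sub_smul]
    rw [Finset.sum_sub_distrib, ← R.coeff_spec_real hθ.1.1, ← R.coeff_spec_real haroot]
  have hθQ : 0 ≤ ⟪θ, θ - a⟫_ℝ := by
    rw [hQdecomp, inner_sum]
    apply Finset.sum_nonneg
    intro β hβ
    rw [real_inner_smul_right]
    have h1 : (0:ℝ) ≤ (R.coeff θ β : ℝ) - (R.coeff a β : ℝ) := by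
      have hh := hd β hβ
      have hh2 : (R.coeff a β : ℝ) ≤ (R.coeff θ β : ℝ) := by exact_mod_cast hh
      linarith
    have h2 : 0 ≤ ⟪θ, β⟫_ℝ := by
      by_cases hc : β = αθ
      · subst hc; rw [R.inner_theta_alpha hfund]; linarith [R.inner_alpha_pos hfund]
      · rw [R.inner_theta_simple_zero hfund hβ hc]
    positivity
  have haQ : ⟪a, θ - a⟫_ℝ < 0 := by
    have hexp : ⟪θ + a, θ - a⟫_ℝ = ⟪θ, θ⟫_ℝ - ⟪a, a⟫_ℝ := by
      rw [inner_add_left, inner_sub_right, inner_sub_right]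
      rw [real_inner_comm a θ]
      ring
    have : ⟪θ + a, θ - a⟫_ℝ < 0 := by rw [hexp]; linarith
    rw [inner_add_left] at this
    linarith
  have hexists : ∃ β ∈ R.simples, ⟪a, β⟫_ℝ < 0 := by
    by_contra hall
    push_neg at hall
    have : 0 ≤ ⟪a, θ - a⟫_ℝ := by
      rw [hQdecomp, inner_sum]
      apply Finset.sum_nonneg
      intro β hβ
      rw [real_inner_smul_right]
      have h1 : (0:ℝ) ≤ (R.coeff θ β : ℝ) - (R.coeff a β : ℝ) := by
        have hh := hd β hβ
        have hh2 : (R.coeff a β : ℝ) ≤ (R.coeff θ β : ℝ) := by exact_mod_cast hh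
        linarith
      exact mul_nonneg h1 (hall β hβ)
    linarith
  obtain ⟨β, hβ, hβneg⟩ := hexists
  have hβr := R.simples_sub hβ
  have hβ0 : β ≠ 0 := R.nonzero β hβr
  obtain ⟨k, hk, hcoeffs⟩ := R.coeff_rsRefl_simple hβ haroot
  have hkneg : k ≤ -1 := by
    have hββ := R.inner_self_pos_root hβr
    have : (k : ℝ) < 0 := by
      rw [← hk]
      apply div_neg_of_neg_of_pos _ hββ
      linarith
    have : k < 0 := by exact_mod_cast this
    omega
  have hanew : rsRefl β a ∈ T := by
    refine ⟨R.rsRefl_root hβr haroot, ?_⟩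
    rw [inner_rsRefl β hβ0]
    exact halen
  have hsum : ∑ α ∈ R.simples, R.coeff (rsRefl β a) α
      = (∑ α ∈ R.simples, R.coeff a α) - k := by
    rw [Finset.sum_congr rfl hcoeffs, Finset.sum_sub_distrib,
      Finset.sum_ite_eq' R.simples β (fun _ => k), if_pos hβ]
  have hle : (∑ α ∈ R.simples, R.coeff a α) ≤ ∑ α ∈ R.simples, R.coeff (rsRefl β a) α := by
    rw [hsum]; omega
  have := hamax (rsRefl β a) hanew hle
  rw [hsum] at this
  omega

lemma coeff_theta_alpha (hθ : R.IsHighest θ) (hfund : R.IsFundamental θ αθ) :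
    R.coeff θ αθ = 2 := by
  have hαr := R.simples_sub hfund.1
  have hθr := hθ.1.1
  have hθθ := R.inner_self_pos_root hθr
  have hA := R.inner_alpha_pos hfund
  obtain ⟨k', hk'⟩ := R.crystal θ hθr αθ hαr
  have hαθ : ⟪αθ, θ⟫_ℝ = ⟪αθ, αθ⟫_ℝ / 2 := by
    rw [real_inner_comm]; exact R.inner_theta_alpha hfund
  have hk'val : (k' : ℝ) * ⟪θ, θ⟫_ℝ = ⟪αθ, αθ⟫_ℝ := by
    rw [← hk', hαθ]; field_simp
  have hk'pos : 0 < (k' : ℝ) := by nlinarith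
  have hk'1 : 1 ≤ k' := by exact_mod_cast hk'pos
  have hlong := R.theta_long hθ hfund hαr
  have heq : ⟪θ, θ⟫_ℝ = ⟪αθ, αθ⟫_ℝ := by
    have hk'1r : (1:ℝ) ≤ (k' : ℝ) := by exact_mod_cast hk'1
    nlinarith
  have hct := R.inner_theta_coeff hfund hθr
  rw [heq] at hct
  have h2 : ⟪αθ, αθ⟫_ℝ * 2 = ⟪αθ, αθ⟫_ℝ * (R.coeff θ αθ : ℝ) := by
    linear_combination 2 * hct
  have h3 : (2:ℝ) = (R.coeff θ αθ : ℝ) := mul_left_cancel₀ (ne_of_gt hA) h2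
  exact_mod_cast h3.symm

lemma theta_ne_alpha (hfund : R.IsFundamental θ αθ) : θ ≠ αθ := by
  intro h
  have := R.inner_theta_alpha hfund
  rw [h] at this
  have hA := R.inner_alpha_pos hfund
  linarith

lemma theta'_root (hθ : R.IsHighest θ) (hfund : R.IsFundamental θ αθ) :
    θ - αθ ∈ R.roots := by
  have hαr := R.simples_sub hfund.1
  have heq : rsRefl αθ θ = θ - αθ := by
    rw [rsRefl_def, hfund.2.2.2, one_smul]
  rw [← heq]
  exact R.rsRefl_root hαr hθ.1.1

lemma coeff_theta' (hθ : R.IsHighest θ) (hfund : R.IsFundamental θ αθ) :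
    ∀ β ∈ R.simples, R.coeff (θ - αθ) β
      = R.coeff θ β - (if β = αθ then 1 else 0) := by
  intro β hβ
  rw [R.coeff_sub hθ.1.1 (R.simples_sub hfund.1) (R.theta'_root hθ hfund) β hβ,
    R.simple_coeff hfund.1 β hβ]

lemma theta'_pos (hθ : R.IsHighest θ) (hfund : R.IsFundamental θ αθ) :
    θ - αθ ∈ R.posRoots := by
  refine ⟨R.theta'_root hθ hfund, fun β hβ => ?_⟩
  rw [R.coeff_theta' hθ hfund β hβ]
  by_cases hc : β = αθ
  · rw [if_pos hc, hc, R.coeff_theta_alpha hθ hfund]; omega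
  · rw [if_neg hc, sub_zero]; exact hθ.1.2 β hβ

end Aux4
end RootSystemData
namespace RootSystemData
open scoped Classical
section Aux5
variable {V : Type} [NormedAddCommGroup V] [InnerProductSpace ℝ V] [FiniteDimensional ℝ V]
variable (R : RootSystemData V)

/-- If a positive root `γ` is mapped by a word to a simple root, and every simple root in the
support of `γ` is mapped to a positive root, then `γ` is itself simple. -/
lemma image_simple (l : List V) (hl : ∀ a ∈ l, a ∈ R.simples) {γ β : V}
    (hγ : γ ∈ R.posRoots) (hβ : β ∈ R.simples) (him : wordMap l γ = β)
    (hface : ∀ α ∈ R.simples, R.coeff γ α ≠ 0 → wordMap l α ∈ R.posRoots) :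
    γ ∈ R.simples := by
  have hγroot := hγ.1
  have hsumβ : ∑ δ ∈ R.simples, R.coeff β δ = 1 := by
    rw [Finset.sum_congr rfl (fun δ hδ => R.simple_coeff hβ δ hδ),
      Finset.sum_ite_eq' R.simples β (fun _ => (1:ℤ)), if_pos hβ]
  have himg : ∀ δ ∈ R.simples, (R.coeff β δ : ℝ)
      = ∑ α ∈ R.simples, (R.coeff γ α : ℝ) * (R.coeff (wordMap l α) δ : ℝ) := by
    intro δ hδ
    have h := R.coeff_image l hl hγroot δ hδ
    rwa [him] at h
  have hsum1 : (∑ α ∈ R.simples,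
      R.coeff γ α * ∑ δ ∈ R.simples, R.coeff (wordMap l α) δ) = 1 := by
    have hr : ((∑ α ∈ R.simples,
        R.coeff γ α * ∑ δ ∈ R.simples, R.coeff (wordMap l α) δ : ℤ) : ℝ)
        = ((∑ δ ∈ R.simples, R.coeff β δ : ℤ) : ℝ) := by
      push_cast
      rw [Finset.sum_congr rfl
        (fun α _ => Finset.mul_sum R.simples (fun δ => (R.coeff (wordMap l α) δ : ℝ))
          ((R.coeff γ α : ℝ))), Finset.sum_comm]
      exact Finset.sum_congr rfl (fun δ hδ => (himg δ hδ).symm)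
    have hZ : (∑ α ∈ R.simples, R.coeff γ α * ∑ δ ∈ R.simples, R.coeff (wordMap l α) δ)
        = ∑ δ ∈ R.simples, R.coeff β δ := by exact_mod_cast hr
    rw [hZ, hsumβ]
  have hhge : ∀ α ∈ R.simples, R.coeff γ α ≠ 0 →
      1 ≤ ∑ δ ∈ R.simples, R.coeff (wordMap l α) δ := by
    intro α hα hcne
    have hwpos := hface α hα hcne
    by_contra hlt
    push_neg at hlt
    have hge0 : 0 ≤ ∑ δ ∈ R.simples, R.coeff (wordMap l α) δ :=
      Finset.sum_nonneg (fun δ hδ => hwpos.2 δ hδ)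
    have hsum0 : ∑ δ ∈ R.simples, R.coeff (wordMap l α) δ = 0 := by omega
    exact R.root_nonzero_coeff hwpos.1
      ((Finset.sum_eq_zero_iff_of_nonneg (fun δ hδ => hwpos.2 δ hδ)).mp hsum0)
  have htnn : ∀ α ∈ R.simples,
      0 ≤ R.coeff γ α * ∑ δ ∈ R.simples, R.coeff (wordMap l α) δ := by
    intro α hα
    by_cases hz : R.coeff γ α = 0
    · rw [hz, zero_mul]
    · exact mul_nonneg (hγ.2 α hα) (le_trans zero_le_one (hhge α hα hz))
  have hex : ∃ α₀ ∈ R.simples, R.coeff γ α₀ ≠ 0 := by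
    by_contra hall
    push_neg at hall
    exact R.root_nonzero_coeff hγroot hall
  obtain ⟨α₀, hα₀, hc₀⟩ := hex
  have hzero : ∀ α ∈ R.simples, α ≠ α₀ → R.coeff γ α = 0 := by
    intro α₁ hα₁ hne₁
    by_contra hc₁
    have ht0 : 1 ≤ R.coeff γ α₀ * ∑ δ ∈ R.simples, R.coeff (wordMap l α₀) δ := by
      have h1 : 1 ≤ R.coeff γ α₀ := by have := hγ.2 α₀ hα₀; omega
      have h2 := hhge α₀ hα₀ hc₀
      nlinarith
    have ht1 : 1 ≤ R.coeff γ α₁ * ∑ δ ∈ R.simples, R.coeff (wordMap l α₁) δ := by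
      have h1 : 1 ≤ R.coeff γ α₁ := by have := hγ.2 α₁ hα₁; omega
      have h2 := hhge α₁ hα₁ hc₁
      nlinarith
    have hsub : ({α₁, α₀} : Finset V) ⊆ R.simples := by
      intro x hx
      rcases Finset.mem_insert.mp hx with h | h
      · subst h; exact hα₁
      · rw [Finset.mem_singleton.mp h]; exact hα₀
    have hpair : (R.coeff γ α₁ * ∑ δ ∈ R.simples, R.coeff (wordMap l α₁) δ)
        + (R.coeff γ α₀ * ∑ δ ∈ R.simples, R.coeff (wordMap l α₀) δ)
        ≤ ∑ α ∈ R.simples, R.coeff γ α * ∑ δ ∈ R.simples, R.coeff (wordMap l α) δ := by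
      have h := Finset.sum_le_sum_of_subset_of_nonneg hsub (fun i hi _ => htnn i hi)
      rwa [Finset.sum_pair hne₁] at h
    omega
  have ht0eq : R.coeff γ α₀ * ∑ δ ∈ R.simples, R.coeff (wordMap l α₀) δ = 1 := by
    rw [← hsum1]
    refine (Finset.sum_eq_single_of_mem (f := fun α =>
      R.coeff γ α * ∑ δ ∈ R.simples, R.coeff (wordMap l α) δ) α₀ hα₀ ?_).symm
    intro b hb hne
    simp only [hzero b hb hne, zero_mul]
  have hc1 : R.coeff γ α₀ = 1 := by
    have h1 : 1 ≤ R.coeff γ α₀ := by have := hγ.2 α₀ hα₀; omega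
    have h2 := hhge α₀ hα₀ hc₀
    nlinarith
  have hγeq : γ = α₀ := by
    have hthis := R.coeff_spec γ hγroot
    have hs := Finset.sum_eq_single_of_mem (s := R.simples)
      (f := fun α => R.coeff γ α • α) α₀ hα₀
      (fun b hb hne => by simp only [hzero b hb hne, zero_smul])
    rw [hs] at hthis
    simp only [hc1, one_smul] at hthis
    exact hthis
  rw [hγeq]
  exact hα₀

end Aux5
end RootSystemData
/-- Proposition 2.5, key step: if `θ` is fundamental and `w ∈ W` is the
minimal length element with `w(θ) = α_θ`, then `w⁻¹` permutes the simple roots orthogonal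
to `α_θ`: for `β ∈ Π` with `(β, α_θ) = 0`, one has `w⁻¹(β) ∈ Π` and `(w⁻¹(β), α_θ) = 0`. -/
theorem stmt4 {V : Type} [NormedAddCommGroup V] [InnerProductSpace ℝ V] [FiniteDimensional ℝ V]
    (R : RootSystemData V) (θ αθ : V) (hθ : R.IsHighest θ)
    (hfund : R.IsFundamental θ αθ)
    (l : List V) (hl : ∀ α ∈ l, α ∈ R.simples) (hw : wordMap l θ = αθ)
    (hmin : ∀ l' : List V, (∀ α ∈ l', α ∈ R.simples) → wordMap l' θ = αθ →
      l.length ≤ l'.length) :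
    ∀ β ∈ R.simples, ⟪β, αθ⟫_ℝ = 0 →
      wordMap l.reverse β ∈ R.simples ∧ ⟪wordMap l.reverse β, αθ⟫_ℝ = 0 := by
  classical
  intro β hβ hβαθ
  have hαS := hfund.1
  have hαr : αθ ∈ R.roots := R.simples_sub hαS
  have hθr : θ ∈ R.roots := hθ.1.1
  have hA : 0 < ⟪αθ, αθ⟫_ℝ := R.inner_alpha_pos hfund
  have hlroots : ∀ a ∈ l, a ∈ R.roots := fun a ha => R.simples_sub (hl a ha)
  have hl0 : ∀ a ∈ l, a ≠ 0 := fun a ha => R.nonzero a (hlroots a ha)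
  have hlrev : ∀ a ∈ l.reverse, a ∈ R.simples := fun a ha => hl a (List.mem_reverse.mp ha)
  have hlrevroots : ∀ a ∈ l.reverse, a ∈ R.roots := fun a ha => R.simples_sub (hlrev a ha)
  have hinner_l : ∀ x y : V, ⟪wordMap l x, wordMap l y⟫_ℝ = ⟪x, y⟫_ℝ :=
    fun x y => wordMap_inner l hl0 x y
  have hθ'root : θ - αθ ∈ R.roots := R.theta'_root hθ hfund
  -- (E3a): for β' ⊥ αθ simple, w⁻¹ β' is positive
  have hE3a : ∀ β' ∈ R.simples, ⟪β', αθ⟫_ℝ = 0 → wordMap l.reverse β' ∈ R.posRoots := by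
    intro β' hβ' horth
    have hroot : wordMap l.reverse β' ∈ R.roots :=
      R.wordMap_roots l.reverse hlrevroots (R.simples_sub hβ')
    rcases R.pos_or_neg hroot with hp | hn
    · exact hp
    · exfalso
      obtain ⟨l', hl', hlen, heq⟩ := R.exchange l hl β' (R.simple_pos hβ') hn
      have hmap : wordMap l' θ = αθ := by
        rw [heq, Function.comp_apply, hw,
          rsRefl_orth β' αθ (by rw [real_inner_comm]; exact horth)]
      have := hmin l' hl' hmap
      omega
  -- (E3b): for δ ≠ αθ simple, w δ is positive
  have hE3b : ∀ δ ∈ R.simples, δ ≠ αθ → wordMap l δ ∈ R.posRoots := by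
    intro δ hδ hne
    have hroot := R.wordMap_roots l hlroots (R.simples_sub hδ)
    rcases R.pos_or_neg hroot with hp | hn
    · exact hp
    · exfalso
      obtain ⟨l', hl', hlen, heq⟩ := R.exchange' l hl δ (R.simple_pos hδ) hn
      have hmap : wordMap l' θ = αθ := by
        rw [heq, Function.comp_apply,
          rsRefl_orth δ θ (R.inner_theta_simple_zero hfund hδ hne), hw]
      have := hmin l' hl' hmap
      omega
  -- (E3d): w αθ is negative
  have hxroot : wordMap l αθ ∈ R.roots := R.wordMap_roots l hlroots hαr
  have hxneg : -(wordMap l αθ) ∈ R.posRoots := by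
    rcases R.pos_or_neg hxroot with hp | hn
    · exfalso
      have hθ'pos := R.theta'_pos hθ hfund
      have hface : ∀ α ∈ R.simples, R.coeff (θ - αθ) α ≠ 0 → wordMap l α ∈ R.posRoots := by
        intro α hα _
        by_cases hc : α = αθ
        · rw [hc]; exact hp
        · exact hE3b α hα hc
      have hwθ' : wordMap l (θ - αθ) ∈ R.posRoots := R.pos_image l hl hθ'pos hface
      have hsplit : αθ = wordMap l (θ - αθ) + wordMap l αθ := by
        rw [← wordMap_add, sub_add_cancel, hw]
      have hco : ∀ α ∈ R.simples, R.coeff αθ α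
          = R.coeff (wordMap l (θ - αθ)) α + R.coeff (wordMap l αθ) α := by
        intro α hα
        conv_lhs => rw [hsplit]
        exact R.coeff_add hwθ'.1 hxroot (by rw [← hsplit]; exact hαr) α hα
      by_cases hcx : R.coeff (wordMap l αθ) αθ = 0
      · apply R.root_nonzero_coeff hxroot
        intro α hα
        have h2 := hco α hα
        rw [R.simple_coeff hαS α hα] at h2
        have h3 := hwθ'.2 α hα
        have h4 := hp.2 α hα
        by_cases hc : α = αθ
        · rw [hc]; exact hcx
        · rw [if_neg hc] at h2; omega
      · apply R.root_nonzero_coeff hwθ'.1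
        intro α hα
        have h2 := hco α hα
        rw [R.simple_coeff hαS α hα] at h2
        have h3 := hwθ'.2 α hα
        have h4 := hp.2 α hα
        by_cases hc : α = αθ
        · subst hc
          rw [if_pos rfl] at h2
          omega
        · rw [if_neg hc] at h2; omega
    · exact hn
  -- φ := w⁻¹ θ
  have hφroot : wordMap l.reverse θ ∈ R.roots := R.wordMap_roots l.reverse hlrevroots hθr
  have hwφ : wordMap l (wordMap l.reverse θ) = θ := wordMap_right_inv l hl0 θ
  have hφθ : ⟪θ, wordMap l.reverse θ⟫_ℝ = ⟪αθ, αθ⟫_ℝ / 2 := by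
    have h := hinner_l θ (wordMap l.reverse θ)
    rw [hw, hwφ] at h
    rw [← h, real_inner_comm]
    exact R.inner_theta_alpha hfund
  have hφpos : wordMap l.reverse θ ∈ R.posRoots := by
    rcases R.pos_or_neg hφroot with hp | hn
    · exact hp
    · exfalso
      have hd := R.theta_dominant hfund hn
      rw [inner_neg_right] at hd
      linarith
  have hcφ : R.coeff (wordMap l.reverse θ) αθ = 1 := by
    have h := R.inner_theta_coeff hfund hφroot
    rw [hφθ] at h
    have hA2 : ⟪αθ, αθ⟫_ℝ / 2 ≠ 0 := by positivity
    have h2 : (1:ℝ) * (⟪αθ, αθ⟫_ℝ / 2) = (R.coeff (wordMap l.reverse θ) αθ : ℝ)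
        * (⟪αθ, αθ⟫_ℝ / 2) := by rw [one_mul]; exact h
    have h3 : (1:ℝ) = (R.coeff (wordMap l.reverse θ) αθ : ℝ) := mul_right_cancel₀ hA2 h2
    exact_mod_cast h3.symm
  -- (φ, αθ) ≤ 0
  have hφαθ : ⟪wordMap l.reverse θ, αθ⟫_ℝ ≤ 0 := by
    have h := hinner_l (wordMap l.reverse θ) αθ
    rw [hwφ] at h
    have hd := R.theta_dominant hfund hxneg
    rw [inner_neg_right] at hd
    linarith [h.symm.le]
  -- (φ, θ - αθ) > 0
  have hφθ' : 0 < ⟪θ - αθ, wordMap l.reverse θ⟫_ℝ := by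
    rw [inner_sub_left]
    have h1 : ⟪θ, wordMap l.reverse θ⟫_ℝ = ⟪αθ, αθ⟫_ℝ / 2 := hφθ
    have h2 : ⟪αθ, wordMap l.reverse θ⟫_ℝ ≤ 0 := by
      rw [real_inner_comm]; exact hφαθ
    linarith
  -- φ = θ - αθ
  have hφeq : wordMap l.reverse θ = θ - αθ := by
    by_contra hne0
    have hψ₀root : (θ - αθ) - wordMap l.reverse θ ∈ R.roots :=
      R.root_sub_root hθ'root hφroot hφθ' (fun h => hne0 h.symm)
    have hcψ : R.coeff ((θ - αθ) - wordMap l.reverse θ) αθ = 0 := by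
      rw [R.coeff_sub hθ'root hφroot hψ₀root αθ hαS,
        R.coeff_theta' hθ hfund αθ hαS, if_pos rfl, R.coeff_theta_alpha hθ hfund, hcφ]
      norm_num
    rcases R.pos_or_neg hψ₀root with hp | hn
    · -- ψ₀ positive : contradiction with θ highest
      have hwψ : wordMap l ((θ - αθ) - wordMap l.reverse θ) ∈ R.posRoots := by
        apply R.pos_image l hl hp
        intro α hα hcne
        by_cases hc : α = αθ
        · exfalso; rw [hc] at hcne; exact hcne hcψ
        · exact hE3b α hα hc
      have hwθ'root : wordMap l (θ - αθ) ∈ R.roots := R.wordMap_roots l hlroots hθ'root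
      have hsplit : wordMap l (θ - αθ) = θ + wordMap l ((θ - αθ) - wordMap l.reverse θ) := by
        conv_rhs => rw [wordMap_sub, hwφ]
        abel
      have hrle := R.rle_coeff hwθ'root hθr (hθ.2 _ hwθ'root)
      have hcoadd := R.coeff_add hθr hwψ.1 (by rw [← hsplit]; exact hwθ'root)
      apply R.root_nonzero_coeff hwψ.1
      intro α hα
      have h1 : R.coeff (wordMap l (θ - αθ)) α
          = R.coeff θ α + R.coeff (wordMap l ((θ - αθ) - wordMap l.reverse θ)) α := by
        conv_lhs => rw [hsplit]
        exact hcoadd α hα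
      have h2 := hrle α hα
      have h3 := hwψ.2 α hα
      omega
    · -- ψ₀ negative : contradiction with θ highest applied to φ
      have hψpos : wordMap l.reverse θ - (θ - αθ) ∈ R.posRoots := by
        rwa [show wordMap l.reverse θ - (θ - αθ) = -((θ - αθ) - wordMap l.reverse θ) by abel]
      have hrleφ := R.rle_coeff hφroot hθr (hθ.2 _ hφroot)
      have hsplit2 : wordMap l.reverse θ = (θ - αθ) + (wordMap l.reverse θ - (θ - αθ)) := by
        abel
      have hcoadd := R.coeff_add hθ'root hψpos.1 (by rw [← hsplit2]; exact hφroot)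
      apply R.root_nonzero_coeff hψpos.1
      intro α hα
      have h1 : R.coeff (wordMap l.reverse θ) α
          = R.coeff (θ - αθ) α + R.coeff (wordMap l.reverse θ - (θ - αθ)) α := by
        conv_lhs => rw [hsplit2]
        exact hcoadd α hα
      have h2 := hrleφ α hα
      have h3 := hψpos.2 α hα
      have h4 := R.coeff_theta' hθ hfund α hα
      by_cases hc : α = αθ
      · subst hc
        rw [if_pos rfl] at h4
        have h5 := R.coeff_theta_alpha hθ hfund
        have h6 := hcφ
        omega
      · rw [if_neg hc] at h4
        omega
  -- hence w(θ - αθ) = θ and w αθ = αθ - θ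
  have hwθ'θ : wordMap l (θ - αθ) = θ := by
    rw [← hφeq]; exact hwφ
  have hxval : wordMap l αθ = αθ - θ := by
    have h : wordMap l αθ = wordMap l θ - wordMap l (θ - αθ) := by
      rw [← wordMap_sub]
      congr 1
      abel
    rw [h, hw, hwθ'θ]
  -- β ≠ αθ and (β, θ) = 0
  have hβne : β ≠ αθ := by
    intro hc
    rw [hc] at hβαθ
    linarith
  have hβθ : ⟪β, θ⟫_ℝ = 0 := by
    rw [real_inner_comm]
    exact R.inner_theta_simple_zero hfund hβ hβne
  -- the two goals
  have hγpos : wordMap l.reverse β ∈ R.posRoots := hE3a β hβ hβαθ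
  have hγroot := hγpos.1
  have hwγ : wordMap l (wordMap l.reverse β) = β := wordMap_right_inv l hl0 β
  constructor
  · -- simplicity
    have hγθ : ⟪θ, wordMap l.reverse β⟫_ℝ = 0 := by
      have h := hinner_l (wordMap l.reverse β) θ
      rw [hwγ, hw] at h
      rw [real_inner_comm, ← h]
      exact hβαθ
    have hcγ : R.coeff (wordMap l.reverse β) αθ = 0 := by
      have h := R.inner_theta_coeff hfund hγroot
      rw [hγθ] at h
      have hA2 : ⟪αθ, αθ⟫_ℝ / 2 ≠ 0 := by positivity
      have h2 : (R.coeff (wordMap l.reverse β) αθ : ℝ) = 0 := by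
        rcases mul_eq_zero.mp h.symm with h' | h'
        · exact h'
        · exact absurd h' hA2
      exact_mod_cast h2
    apply R.image_simple l hl hγpos hβ hwγ
    intro α hα hcne
    have hne : α ≠ αθ := by
      intro hc
      rw [hc] at hcne
      exact hcne hcγ
    exact hE3b α hα hne
  · -- orthogonality
    have h := hinner_l (wordMap l.reverse β) αθ
    rw [hwγ, hxval] at h
    rw [← h, inner_sub_right, hβαθ, hβθ, sub_zero]
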